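/- arXiv:0808.4066 — 3 statements merged into one kernel-verified Lean document; each statement's English description precedes it below -/
import Mathlib

section
/- For p > i and q > i with p ≠ q, the functions G_{p,i} and G_{q,i} satisfy G_{p,i}·G_{q,i} = 0, where G_{p,i}(x₁,…,x_N) = θ_R̃(x_p - x_i) · ∏_{j < p, j ≠ i} (1 - θ_{2R̃}(x_j - x_p)), and θ_r is the indicator of {|x| ≤ r}. Consequently, ∏_{p > i} (1 + (2M-1)G_{p,i}) ≤ 2M for any M ≥ 1. -/
/-- For `p, q > i`, `p ≠ q`, the functions `G_{p,i}` and `G_{q,i}` have disjoint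
supports, and hence `∏_{p>i} (1 + (2M-1)G_{p,i}) ≤ 2M` for `M ≥ 1`. -/
theorem stmt_4 (N : ℕ) (Rt M : ℝ) (hRt : 0 < Rt) (hM : 1 ≤ M)
    (x : Fin N → EuclideanSpace ℝ (Fin 3)) (i : Fin N)
    (θ : ℝ → EuclideanSpace ℝ (Fin 3) → ℝ)
    (hθ : ∀ r y, θ r y = if ‖y‖ ≤ r then 1 else 0)
    (G : Fin N → ℝ)
    (hG : ∀ p, G p = θ Rt (x p - x i) *
      ∏ j ∈ Finset.univ.filter (fun j => j < p ∧ j ≠ i),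
        (1 - θ (2 * Rt) (x j - x p))) :
    (∀ p q : Fin N, i < p → i < q → p ≠ q → G p * G q = 0) ∧
    ∏ p ∈ Finset.univ.filter (fun p => i < p), (1 + (2 * M - 1) * G p) ≤ 2 * M := by
  have hθ01 : ∀ r y, θ r y = 0 ∨ θ r y = 1 := by
    intro r y; rw [hθ]; split <;> simp
  have hG01 : ∀ p, G p = 0 ∨ G p = 1 := by
    intro p
    rw [hG p]
    have h2 : (∏ j ∈ Finset.univ.filter (fun j => j < p ∧ j ≠ i),
        (1 - θ (2 * Rt) (x j - x p))) = 0 ∨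
        (∏ j ∈ Finset.univ.filter (fun j => j < p ∧ j ≠ i),
        (1 - θ (2 * Rt) (x j - x p))) = 1 := by
      refine Finset.prod_induction _ (fun a => a = 0 ∨ a = 1) ?_ (Or.inr rfl) ?_
      · rintro a b (ha|ha) (hb|hb) <;> simp [ha, hb]
      · intro j _
        rcases hθ01 (2*Rt) (x j - x p) with h|h <;> simp [h]
    rcases hθ01 Rt (x p - x i) with h|h <;> rcases h2 with h'|h' <;> simp [h, h']
  have key : ∀ p q : Fin N, i < p → i < q → p < q → G p * G q = 0 := by
    intro p q hip hiq hpq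
    by_contra hne
    have hGp : G p ≠ 0 := fun h => hne (by simp [h])
    have hGq : G q ≠ 0 := fun h => hne (by simp [h])
    rw [hG p] at hGp
    rw [hG q] at hGq
    have hθp : θ Rt (x p - x i) ≠ 0 := fun h => hGp (by simp [h])
    have hθq : θ Rt (x q - x i) ≠ 0 := fun h => hGq (by simp [h])
    have hp_norm : ‖x p - x i‖ ≤ Rt := by
      by_contra h; exact hθp (by rw [hθ]; simp [h])
    have hq_norm : ‖x q - x i‖ ≤ Rt := by
      by_contra h; exact hθq (by rw [hθ]; simp [h])
    have hprod : (∏ j ∈ Finset.univ.filter (fun j => j < q ∧ j ≠ i),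
        (1 - θ (2 * Rt) (x j - x q))) ≠ 0 := fun h => hGq (by simp [h])
    have hpmem : p ∈ Finset.univ.filter (fun j => j < q ∧ j ≠ i) := by
      simp [hpq, hip.ne']
    have hfac := Finset.prod_ne_zero_iff.mp hprod p hpmem
    have hθ0 : θ (2 * Rt) (x p - x q) = 0 := by
      rcases hθ01 (2*Rt) (x p - x q) with h|h
      · exact h
      · rw [h] at hfac; simp at hfac
    have hfar : ¬ ‖x p - x q‖ ≤ 2 * Rt := by
      intro h; rw [hθ, if_pos h] at hθ0; norm_num at hθ0
    apply hfar
    calc ‖x p - x q‖ = ‖(x p - x i) - (x q - x i)‖ := by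
          rw [show x p - x q = (x p - x i) - (x q - x i) from by abel]
      _ ≤ ‖x p - x i‖ + ‖x q - x i‖ := norm_sub_le _ _
      _ ≤ 2 * Rt := by linarith
  have disj : ∀ p q : Fin N, i < p → i < q → p ≠ q → G p * G q = 0 := by
    intro p q hip hiq hpq
    rcases lt_or_gt_of_ne hpq with h|h
    · exact key p q hip hiq h
    · rw [mul_comm]; exact key q p hiq hip h
  refine ⟨disj, ?_⟩
  by_cases hex : ∃ p ∈ Finset.univ.filter (fun p => i < p), G p ≠ 0
  · obtain ⟨p₀, hp₀mem, hp₀⟩ := hex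
    rw [Finset.prod_eq_single p₀]
    · rcases hG01 p₀ with h|h
      · exact absurd h hp₀
      · rw [h]; linarith
    · intro q hq hqne
      have hiq : i < q := by simpa using hq
      have hip : i < p₀ := by simpa using hp₀mem
      have hz := disj q p₀ hiq hip hqne
      have hGq0 : G q = 0 := by
        rcases mul_eq_zero.mp hz with h|h
        · exact h
        · exact absurd h hp₀
      simp [hGq0]
    · intro h; exact absurd hp₀mem h
  · push_neg at hex
    rw [Finset.prod_congr rfl (fun p hp => by rw [hex p hp])]
    simp only [mul_zero, add_zero, Finset.prod_const_one]
    linarith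
end

section
/- Pigeonhole bound for the soft-core replacement: for any x ∈ ℝ³ and points {x_i}_{i ∈ π₂} ⊂ ℝ³, if there exists i ∈ π₂' with |x - x_i| ≤ R₀a (where π₂' = {j ∈ π₂ : ∃ cube B_n with d(x_j, B_n) ≤ R₀a and |G(B_n)| ≤ n₁}), then Σ_{i ∈ π₂} θ_{R₀a}(x - x_i) ≤ n₁. Here G(B_n) achieves the maximum of |{i ∈ π₂ : |x_i - y| ≤ R₀a}| over y with d(y, B_n) ≤ 2R₀a. -/
open scoped Classical

/-- Pigeonhole bound for the soft-core replacement: if `x` is within `R₀a` of some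
particle of `π₂'` (a particle near a cube whose maximal local particle number is
`≤ n₁`), then at most `n₁` particles of `π₂` are within `R₀a` of `x`. -/
theorem stmt_13 {ι κ : Type*} [Fintype ι]
    (R₀ a : ℝ) (hR₀ : 0 < R₀) (ha : 0 < a) (n₁ : ℕ)
    (π₂ : Finset ι) (x : ι → EuclideanSpace ℝ (Fin 3))
    (B : κ → Set (EuclideanSpace ℝ (Fin 3)))
    (hBne : ∀ n, (B n).Nonempty)
    (Gcard : κ → ℕ)
    (hmax : ∀ (n : κ) (y : EuclideanSpace ℝ (Fin 3)),
      Metric.infDist y (B n) ≤ 2 * (R₀ * a) →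
      (π₂.filter (fun i => ‖x i - y‖ ≤ R₀ * a)).card ≤ Gcard n) :
    ∀ p : EuclideanSpace ℝ (Fin 3),
      (∃ i ∈ π₂, (∃ n : κ, Metric.infDist (x i) (B n) ≤ R₀ * a ∧ Gcard n ≤ n₁) ∧
        ‖p - x i‖ ≤ R₀ * a) →
      (π₂.filter (fun i => ‖p - x i‖ ≤ R₀ * a)).card ≤ n₁ := by
  rintro p ⟨i, hi, ⟨n, hn, hGn⟩, hp⟩
  have hinf : Metric.infDist p (B n) ≤ 2 * (R₀ * a) := by
    have h1 : Metric.infDist p (B n) ≤ Metric.infDist (x i) (B n) + dist p (x i) :=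
      Metric.infDist_le_infDist_add_dist
    have : dist p (x i) ≤ R₀ * a := by rwa [dist_eq_norm]
    linarith
  have := hmax n p hinf
  calc (π₂.filter (fun j => ‖p - x j‖ ≤ R₀ * a)).card
      = (π₂.filter (fun j => ‖x j - p‖ ≤ R₀ * a)).card := by
        congr 1; apply Finset.filter_congr; intro j _; simp [norm_sub_rev]
    _ ≤ Gcard n := this
    _ ≤ n₁ := hGn
end

section
/- If a continuous, compactly supported, spherically symmetric potential w : ℝ³ → ℝ is stable, i.e. there exists C such that Σ_{1≤i≠j≤N} w(x_i - x_j) ≥ -CN for all N and all configurations, and w takes a negative value somewhere, then w(0) > 0. -/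
open scoped Classical

lemma sum_split_aux (n : ℕ) (a b : ℝ) :
    ∑ j ∈ Finset.range (2*n), (if j < n then a else b) = n*a + n*b := by
  rw [Finset.range_eq_Ico, ← Finset.sum_Ico_consecutive _ (Nat.zero_le n) (by omega)]
  have h1 : ∑ j ∈ Finset.Ico 0 n, (if j < n then a else b) = n * a := by
    rw [Finset.sum_congr rfl (fun j hj => by
      simp only [Finset.mem_Ico] at hj; rw [if_pos hj.2])]
    simp [Finset.sum_const, Nat.card_Ico]
  have h2 : ∑ j ∈ Finset.Ico n (2*n), (if j < n then a else b) = n * b := by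
    rw [Finset.sum_congr rfl (fun j hj => by
      simp only [Finset.mem_Ico] at hj; rw [if_neg (by omega)])]
    rw [Finset.sum_const, Nat.card_Ico]
    have h : 2*n - n = n := by omega
    rw [h, nsmul_eq_mul]
  rw [h1, h2]

/-- A stable, continuous, compactly supported, spherically symmetric potential that
takes a negative value somewhere must have a positive core: `w(0) > 0`. -/
theorem stmt_16 (w : EuclideanSpace ℝ (Fin 3) → ℝ)
    (hcont : Continuous w)
    (hcompact : HasCompactSupport w)
    (hrad : ∀ x y : EuclideanSpace ℝ (Fin 3), ‖x‖ = ‖y‖ → w x = w y)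
    (hstable : ∃ Cst : ℝ, ∀ (N : ℕ) (x : Fin N → EuclideanSpace ℝ (Fin 3)),
      -(Cst * N) ≤ ∑ i : Fin N, ∑ j : Fin N,
        (if i ≠ j then w (x i - x j) else 0))
    (hneg : ∃ x₀ : EuclideanSpace ℝ (Fin 3), w x₀ < 0) :
    0 < w 0 := by
  obtain ⟨Cst, hC⟩ := hstable
  obtain ⟨x₀, hx₀⟩ := hneg
  set w0 := w 0 with hw0
  set w1 := w x₀ with hw1
  have hneg' : w (-x₀) = w1 := hrad _ _ (by simp)
  -- key inequality for every n
  have key : ∀ n : ℕ, -(Cst * (2*n)) ≤ (2*n) * ((n : ℝ) * (w0 + w1) - w0) := by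
    intro n
    set X : Fin (2*n) → EuclideanSpace ℝ (Fin 3) :=
      fun i => if (i:ℕ) < n then 0 else x₀ with hX
    have hinner : ∀ i : Fin (2*n),
        ∑ j : Fin (2*n), w (X i - X j) = n * w0 + n * w1 := by
      intro i
      by_cases hi : (i:ℕ) < n
      · have : ∀ j : Fin (2*n), w (X i - X j) =
            if (j:ℕ) < n then w0 else w1 := by
          intro j
          by_cases hj : (j:ℕ) < n <;>
            simp [hX, hi, hj, hw0, ← hneg']
        rw [Finset.sum_congr rfl (fun j _ => this j)]
        rw [Fin.sum_univ_eq_sum_range (fun j => if j < n then w0 else w1)]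
        exact sum_split_aux n w0 w1
      · have : ∀ j : Fin (2*n), w (X i - X j) =
            if (j:ℕ) < n then w1 else w0 := by
          intro j
          by_cases hj : (j:ℕ) < n <;>
            simp [hX, hi, hj, hw0, hw1]
        rw [Finset.sum_congr rfl (fun j _ => this j)]
        rw [Fin.sum_univ_eq_sum_range (fun j => if j < n then w1 else w0)]
        rw [sum_split_aux n w1 w0]; ring
    have hinner' : ∀ i : Fin (2*n),
        ∑ j : Fin (2*n), (if i ≠ j then w (X i - X j) else 0)
          = n * w0 + n * w1 - w0 := by
      intro i
      have heq : ∀ j : Fin (2*n), (if i ≠ j then w (X i - X j) else 0)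
          = w (X i - X j) - (if j = i then w (X i - X j) else 0) := by
        intro j
        by_cases h : j = i
        · subst h; simp
        · simp [h, Ne.symm h]
      rw [Finset.sum_congr rfl (fun j _ => heq j), Finset.sum_sub_distrib,
        Finset.sum_ite_eq' Finset.univ i (fun j => w (X i - X j)), hinner i]
      simp [hw0]
    have := hC (2*n) X
    rw [Finset.sum_congr rfl (fun i _ => hinner' i)] at this
    simp only [Finset.sum_const, Finset.card_univ, Fintype.card_fin,
      nsmul_eq_mul] at this
    push_cast at this ⊢
    linarith
  -- derive w0 + w1 ≥ 0
  have hsum : 0 ≤ w0 + w1 := by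
    by_contra hs
    push_neg at hs
    obtain ⟨n, hn⟩ := exists_nat_gt (max 1 ((Cst + |w0| + 1) / (-(w0 + w1))))
    have hpos : (0:ℝ) < -(w0 + w1) := by linarith
    have h1 : (1:ℝ) ≤ (n:ℝ) := le_of_lt (lt_of_le_of_lt (le_max_left _ _) hn)
    have hn' : (Cst + |w0| + 1) < n * (-(w0 + w1)) := by
      have := lt_of_le_of_lt (le_max_right 1 ((Cst + |w0| + 1) / (-(w0 + w1)))) hn
      rw [div_lt_iff₀ hpos] at this; linarith
    have hk := key n
    have habs : -|w0| ≤ w0 := neg_abs_le w0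
    nlinarith [hk, hn', habs]
  linarith
end
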